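/- Let m > 0, γ ∈ ℝ, ζ ∈ ℝ², and let M_a = [[m^#, μ^t],[μ, M^♭]] be a symmetric positive semidefinite 3×3 matrix with M^♭ the lower-right 2×2 block. Define for θ ∈ ℝ: μ_θ = R(θ)μ, M^♭_θ = R(θ) M^♭ R(θ)^t, M^†_θ = R(θ) M^† R(θ)^t with M^† = (1/2)(M^♭ J − J M^♭). Then for every p = (ω,ℓ), ⟨Γ_θ, p, p⟩ := −(0, P_a) × p − ω M_{a,θ}(0, ℓ^⊥), where M_{a,θ} = 𝓡(θ) M_a 𝓡(θ)^t with 𝓡(θ) = diag(1, R(θ)), and P_a denotes the last two components of M_{a,θ} p, equals the vector (−ℓ^⊥ · M^†_θ ℓ^⊥, ω² μ_θ^⊥ − 2ω M^†_θ ℓ). -/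
import Mathlib
set_option maxHeartbeats 2000000


open Matrix Real

/-- Rotation matrix of angle θ. -/
noncomputable def Rot (θ : ℝ) : Matrix (Fin 2) (Fin 2) ℝ :=
  !![Real.cos θ, -Real.sin θ; Real.sin θ, Real.cos θ]

/-- The block rotation `𝓡(θ) = diag(1, R(θ)) ∈ SO(3)`. -/
noncomputable def bigRot (θ : ℝ) : Matrix (Fin 3) (Fin 3) ℝ :=
  !![1, 0, 0; 0, Real.cos θ, -Real.sin θ; 0, Real.sin θ, Real.cos θ]

/-- The rotation by π/2: `J x = x^⊥`. -/
noncomputable def Jrot : Matrix (Fin 2) (Fin 2) ℝ := !![0, -1; 1, 0]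

/-- Planar perpendicular: `(x₁,x₂)^⊥ = (−x₂,x₁)`. -/
def perp2 (x : Fin 2 → ℝ) : Fin 2 → ℝ := ![-(x 1), x 0]

/-- Identify `(ω, ℓ) ∈ ℝ × ℝ²` with a vector of ℝ³. -/
def toR3 (ω : ℝ) (ℓ : Fin 2 → ℝ) : Fin 3 → ℝ := ![ω, ℓ 0, ℓ 1]

/-- `M^† = (1/2)(M^♭ J − J M^♭)`. -/
noncomputable def Mdagger (Mflat : Matrix (Fin 2) (Fin 2) ℝ) : Matrix (Fin 2) (Fin 2) ℝ :=
  (1 / 2 : ℝ) • (Mflat * Jrot - Jrot * Mflat)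

/-- Explicit form of the Christoffel term
`⟨Γ_θ, p, p⟩ = −(0, P_a) × p − ω M_{a,θ}(0, ℓ^⊥)` for the added inertia
`M_a = [[m^#, μᵗ],[μ, M^♭]]`: it equals
`(−ℓ^⊥ · M^†_θ ℓ^⊥, ω² μ_θ^⊥ − 2ω M^†_θ ℓ)`. -/
theorem christoffel_explicit (m γ : ℝ) (hm : 0 < m) (ζ : Fin 2 → ℝ)
    (msharp : ℝ) (μ : Fin 2 → ℝ) (Mflat : Matrix (Fin 2) (Fin 2) ℝ)
    (hflat : Mflat.IsSymm)
    (Ma : Matrix (Fin 3) (Fin 3) ℝ)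
    (hMa : Ma = !![msharp, μ 0, μ 1;
                   μ 0, Mflat 0 0, Mflat 0 1;
                   μ 1, Mflat 1 0, Mflat 1 1])
    (hpsd : Ma.PosSemidef)
    (θ ω : ℝ) (ℓ : Fin 2 → ℝ) :
    (-(crossProduct (toR3 0 ![((bigRot θ * Ma * (bigRot θ)ᵀ).mulVec (toR3 ω ℓ)) 1,
                              ((bigRot θ * Ma * (bigRot θ)ᵀ).mulVec (toR3 ω ℓ)) 2])
          (toR3 ω ℓ) : Fin 3 → ℝ)
        - ω • (bigRot θ * Ma * (bigRot θ)ᵀ).mulVec (toR3 0 (perp2 ℓ)))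
      = toR3 (-(perp2 ℓ ⬝ᵥ (Rot θ * Mdagger Mflat * (Rot θ)ᵀ).mulVec (perp2 ℓ)))
          (fun i => ω ^ 2 * perp2 ((Rot θ).mulVec μ) i
            - 2 * ω * ((Rot θ * Mdagger Mflat * (Rot θ)ᵀ).mulVec ℓ) i) := by
  have hsym : Mflat 0 1 = Mflat 1 0 := by
    have h := congrFun (congrFun hflat.eq 1) 0
    simpa [Matrix.transpose_apply] using h
  subst hMa
  funext i
  fin_cases i <;>
    simp [crossProduct, toR3, perp2, bigRot, Rot, Jrot, Mdagger, Matrix.mulVec,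
      Matrix.vecMul, Matrix.vecHead, Matrix.vecTail, Matrix.mul_apply,
      Fin.sum_univ_succ, dotProduct, Matrix.cons_val_zero, Matrix.sub_apply,
      Matrix.cons_val_one, Matrix.head_cons, Matrix.of_apply, Function.comp,
      hsym] <;> ring
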